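/- Let μ be a real number with μ > 0 and μ ≠ 1, let r > 0, and let f₁, f₂, g₁, g₂ be holomorphic on the ball B(0, r) ⊆ ℂ with f₁(0) = f₂(0) = g₁(0) = g₂(0) = 1. Define, for z ∈ B(0, r) with z ≠ 0 and z not in the nonpositive real axis, A(z) = z^{(1−μ)/2}·f₂(z), B(z) = ((μ−1)/(μ+1))·z^{(1+μ)/2}·g₂(z), C(z) = ((μ²−1)/(4μ))·z^{(−1−μ)/2}·f₁(z), D(z) = ((1+μ)²/(4μ))·z^{(μ−1)/2}·g₁(z), where z^a denotes the principal complex power. Then z·(C(z)·B′(z) − D(z)·A′(z)) tends to (μ² − 1)/4 as z tends to 0 within the complement of the nonpositive real axis. (Equivalently, the residue at 0 of the one-form C dB − D dA equals (μ² − 1)/4.) -/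

import Mathlib

open Complex

/-- For the canonical Bryant representation of a canonical catenoidal end of
growth `1 − μ`, the residue at `0` of the one-form `C dB − D dA` equals
`(μ² − 1)/4`, expressed as the limit of `z(C B′ − D A′)` as `z → 0` off the
nonpositive real axis. -/
theorem stmt8 (μ : ℝ) (hμ : 0 < μ) (hμ1 : μ ≠ 1) (r : ℝ) (hr : 0 < r)
    (f₁ f₂ g₁ g₂ : ℂ → ℂ)
    (hf₁ : DifferentiableOn ℂ f₁ (Metric.ball 0 r))
    (hf₂ : DifferentiableOn ℂ f₂ (Metric.ball 0 r))
    (hg₁ : DifferentiableOn ℂ g₁ (Metric.ball 0 r))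
    (hg₂ : DifferentiableOn ℂ g₂ (Metric.ball 0 r))
    (hf₁0 : f₁ 0 = 1) (hf₂0 : f₂ 0 = 1) (hg₁0 : g₁ 0 = 1) (hg₂0 : g₂ 0 = 1)
    (A B C D : ℂ → ℂ)
    (hA : ∀ z, A z = z ^ (((1 - (μ : ℂ)) / 2) : ℂ) * f₂ z)
    (hB : ∀ z, B z = (((μ : ℂ) - 1) / ((μ : ℂ) + 1)) * z ^ (((1 + (μ : ℂ)) / 2) : ℂ) * g₂ z)
    (hC : ∀ z, C z = (((μ : ℂ) ^ 2 - 1) / (4 * (μ : ℂ))) * z ^ (((-1 - (μ : ℂ)) / 2) : ℂ) * f₁ z)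
    (hD : ∀ z, D z = (((1 + (μ : ℂ)) ^ 2) / (4 * (μ : ℂ))) * z ^ ((((μ : ℂ) - 1) / 2) : ℂ) * g₁ z) :
    Filter.Tendsto (fun z : ℂ => z * (C z * deriv B z - D z * deriv A z))
      (nhdsWithin 0 Complex.slitPlane)
      (nhds (((μ : ℂ) ^ 2 - 1) / 4)) := by
  have hμ0 : (μ : ℂ) ≠ 0 := by exact_mod_cast hμ.ne'
  have hμp : (μ : ℂ) + 1 ≠ 0 := by
    have : (0:ℝ) < μ + 1 := by linarith
    exact_mod_cast this.ne'
  set a : ℂ := (1 + (μ : ℂ)) / 2 with ha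
  set a₁ : ℂ := (1 - (μ : ℂ)) / 2 with ha₁
  set cB : ℂ := ((μ : ℂ) - 1) / ((μ : ℂ) + 1) with hcB
  set cC : ℂ := ((μ : ℂ) ^ 2 - 1) / (4 * (μ : ℂ)) with hcC
  set cD : ℂ := ((1 + (μ : ℂ)) ^ 2) / (4 * (μ : ℂ)) with hcD
  set G : ℂ → ℂ := fun z =>
    cC * cB * a * (f₁ z * g₂ z) + z * (cC * cB * (f₁ z * deriv g₂ z))
      - cD * a₁ * (g₁ z * f₂ z) - z * (cD * (g₁ z * deriv f₂ z)) with hG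
  have h0r : (0:ℂ) ∈ Metric.ball (0:ℂ) r := by simp [hr]
  have cf₁ : ContinuousAt f₁ 0 := (hf₁.differentiableAt (Metric.isOpen_ball.mem_nhds h0r)).continuousAt
  have cf₂ : ContinuousAt f₂ 0 := (hf₂.differentiableAt (Metric.isOpen_ball.mem_nhds h0r)).continuousAt
  have cg₁ : ContinuousAt g₁ 0 := (hg₁.differentiableAt (Metric.isOpen_ball.mem_nhds h0r)).continuousAt
  have cg₂ : ContinuousAt g₂ 0 := (hg₂.differentiableAt (Metric.isOpen_ball.mem_nhds h0r)).continuousAt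
  have cdf₂ : ContinuousAt (deriv f₂) 0 :=
    (((hf₂.analyticOnNhd Metric.isOpen_ball).deriv) 0 h0r).continuousAt
  have cdg₂ : ContinuousAt (deriv g₂) 0 :=
    (((hg₂.analyticOnNhd Metric.isOpen_ball).deriv) 0 h0r).continuousAt
  have hGc : ContinuousAt G 0 := by
    rw [hG]
    exact (((continuousAt_const.mul (cf₁.mul cg₂)).add
      (continuousAt_id.mul (continuousAt_const.mul (cf₁.mul cdg₂)))).sub
      (continuousAt_const.mul (cg₁.mul cf₂))).sub
      (continuousAt_id.mul (continuousAt_const.mul (cg₁.mul cdf₂)))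
  have hG0 : G 0 = ((μ : ℂ) ^ 2 - 1) / 4 := by
    simp only [hG, hf₁0, hf₂0, hg₁0, hg₂0, mul_one, one_mul, zero_mul, mul_zero,
      add_zero, sub_zero]
    rw [hcC, hcB, ha, hcD, ha₁]
    rw [div_mul_div_comm, div_mul_div_comm, div_mul_div_comm, div_sub_div _ _ (by
      intro h
      apply hμ0
      have : (4:ℂ) * μ * (μ + 1) * 2 ≠ 0 := by
        refine mul_ne_zero (mul_ne_zero (mul_ne_zero (by norm_num) hμ0) hμp) (by norm_num)
      exact absurd h this) (by
      refine mul_ne_zero (mul_ne_zero (by norm_num) hμ0) (by norm_num)), div_eq_div_iff]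
    · ring
    · refine mul_ne_zero (mul_ne_zero (mul_ne_zero (mul_ne_zero (by norm_num) hμ0) hμp) (by norm_num)) ?_
      refine mul_ne_zero (mul_ne_zero (by norm_num) hμ0) (by norm_num)
    · norm_num
  have heq : ∀ᶠ z in nhdsWithin 0 Complex.slitPlane,
      z * (C z * deriv B z - D z * deriv A z) = G z := by
    filter_upwards [self_mem_nhdsWithin,
      eventually_nhdsWithin_of_eventually_nhds (Metric.ball_mem_nhds (0:ℂ) hr)] with z hzs hzb
    have hz0 : z ≠ 0 := slitPlane_ne_zero hzs
    have hf₂' : HasDerivAt f₂ (deriv f₂ z) z :=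
      (hf₂.differentiableAt (Metric.isOpen_ball.mem_nhds hzb)).hasDerivAt
    have hg₂' : HasDerivAt g₂ (deriv g₂ z) z :=
      (hg₂.differentiableAt (Metric.isOpen_ball.mem_nhds hzb)).hasDerivAt
    have hpa : HasDerivAt (fun w : ℂ => w ^ a) (a * z ^ (a - 1)) z :=
      (Complex.hasStrictDerivAt_cpow_const hzs).hasDerivAt
    have hpa₁ : HasDerivAt (fun w : ℂ => w ^ a₁) (a₁ * z ^ (a₁ - 1)) z :=
      (Complex.hasStrictDerivAt_cpow_const hzs).hasDerivAt
    have hdA : deriv A z = a₁ * z ^ (a₁ - 1) * f₂ z + z ^ a₁ * deriv f₂ z := by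
      have : A = fun w : ℂ => w ^ a₁ * f₂ w := funext hA
      rw [this]
      exact (hpa₁.mul hf₂').deriv
    have hdB : deriv B z = cB * (a * z ^ (a - 1)) * g₂ z + cB * z ^ a * deriv g₂ z := by
      have : B = fun w : ℂ => cB * w ^ a * g₂ w := funext hB
      rw [this]
      have := ((hpa.const_mul cB).mul hg₂').deriv
      exact this
    have ea : z ^ (((-1 - (μ:ℂ)) / 2) : ℂ) = (z ^ a)⁻¹ := by
      rw [show (((-1 - (μ:ℂ)) / 2) : ℂ) = -a by rw [ha]; ring, cpow_neg]
    have ed : z ^ ((((μ:ℂ) - 1) / 2) : ℂ) = (z ^ a₁)⁻¹ := by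
      rw [show ((((μ:ℂ) - 1) / 2) : ℂ) = -a₁ by rw [ha₁]; ring, cpow_neg]
    have e1 : z ^ (a - 1) = z ^ a / z := by rw [cpow_sub _ _ hz0, cpow_one]
    have e2 : z ^ (a₁ - 1) = z ^ a₁ / z := by rw [cpow_sub _ _ hz0, cpow_one]
    have hu : z ^ a ≠ 0 := by simp [cpow_eq_zero_iff, hz0]
    have hv : z ^ a₁ ≠ 0 := by simp [cpow_eq_zero_iff, hz0]
    rw [hC z, hD z, hdA, hdB, e1, e2, ea, ed, hG]
    field_simp
    ring
  have := (hGc.tendsto.mono_left nhdsWithin_le_nhds : Filter.Tendsto G (nhdsWithin 0 Complex.slitPlane) (nhds (G 0)))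
  rw [hG0] at this
  exact this.congr' (heq.mono fun _ h => h.symm)
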